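/- arXiv:1708.03349 — 2 statements merged into one kernel-verified Lean document; each statement's English description precedes it below -/
import Mathlib

section
/- Let (A, ·, α) be a super anticommutative Hom-superalgebra over a field K of characteristic 0. Then for all homogeneous w, x, y, z: α²(w)·J̃(x,y,z) - (-1)^{|w|(|x|+|y|+|z|)} α²(x)·J̃(y,z,w) + (-1)^{(|y|+|z|)(|w|+|x|)} α²(y)·J̃(z,w,x) - (-1)^{|z|(|x|+|y|+|w|)} α²(z)·J̃(w,x,y) = J̃(w·x,α(y),α(z)) + (-1)^{(|y|+|z|)(|x|+|w|)} J̃(y·z,α(w),α(x)) + (-1)^{|x|(|y|+|z|)} J̃(w·y,α(z),α(x)) + (-1)^{|z|(|x|+|y|)+|w|(|x|+|z|)} J̃(z·x,α(w),α(y)) - (-1)^{|z|(|x|+|y|+|w|)} J̃(z·w,α(x),α(y)) - (-1)^{|w|(|x|+|y|+|z|)} J̃(x·y,α(z),α(w)). -/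
/-- The sign `(-1)^i` associated to a parity `i : ZMod 2`. -/
def sgn (K : Type*) [Field K] (i : ZMod 2) : K := (-1 : K) ^ i.val

/-- The Hom-superJacobian of elements `x, y, z` of parities `px, py, pz`:
`J̃(x,y,z) = (x·y)·α(z) + (-1)^{px(py+pz)} (y·z)·α(x) + (-1)^{pz(px+py)} (z·x)·α(y)`. -/
def homSuperJacobian {K M : Type*} [Field K] [AddCommGroup M] [Module K M]
    (mul : M →ₗ[K] M →ₗ[K] M) (α : M →ₗ[K] M)
    (px py pz : ZMod 2) (x y z : M) : M :=
  mul (mul x y) (α z) + sgn K (px * (py + pz)) • mul (mul y z) (α x)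
    + sgn K (pz * (px + py)) • mul (mul z x) (α y)

lemma sgn_mul (K : Type*) [Field K] (a b : ZMod 2) : sgn K a * sgn K b = sgn K (a + b) := by
  simp only [sgn, ← pow_add]
  rw [neg_one_pow_eq_pow_mod_two, ZMod.val_add]

set_option maxHeartbeats 2000000 in
theorem stmt5
    {K M : Type*} [Field K] [CharZero K] [AddCommGroup M] [Module K M]
    (A : ZMod 2 → Submodule K M) (hA : DirectSum.IsInternal A)
    (mul : M →ₗ[K] M →ₗ[K] M) (α : M →ₗ[K] M)
    (hmul_even : ∀ i j : ZMod 2, ∀ x ∈ A i, ∀ y ∈ A j, mul x y ∈ A (i + j))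
    (hα_even : ∀ i : ZMod 2, ∀ x ∈ A i, α x ∈ A i)
    (hmult : ∀ x y : M, α (mul x y) = mul (α x) (α y))
    (hanti : ∀ i j : ZMod 2, ∀ x ∈ A i, ∀ y ∈ A j,
      mul x y = -(sgn K (i * j) • mul y x)) :
    ∀ pw px py pz : ZMod 2, ∀ w ∈ A pw, ∀ x ∈ A px, ∀ y ∈ A py, ∀ z ∈ A pz,
      mul (α (α w)) (homSuperJacobian mul α px py pz x y z)
          - sgn K (pw * (px + py + pz)) •
              mul (α (α x)) (homSuperJacobian mul α py pz pw y z w)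
          + sgn K ((py + pz) * (pw + px)) •
              mul (α (α y)) (homSuperJacobian mul α pz pw px z w x)
          - sgn K (pz * (px + py + pw)) •
              mul (α (α z)) (homSuperJacobian mul α pw px py w x y) =
        homSuperJacobian mul α (pw + px) py pz (mul w x) (α y) (α z)
          + sgn K ((py + pz) * (px + pw)) •
              homSuperJacobian mul α (py + pz) pw px (mul y z) (α w) (α x)
          + sgn K (px * (py + pz)) •
              homSuperJacobian mul α (pw + py) pz px (mul w y) (α z) (α x)
          + sgn K (pz * (px + py) + pw * (px + pz)) •
              homSuperJacobian mul α (pz + px) pw py (mul z x) (α w) (α y)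
          - sgn K (pz * (px + py + pw)) •
              homSuperJacobian mul α (pz + pw) px py (mul z w) (α x) (α y)
          - sgn K (pw * (px + py + pz)) •
              homSuperJacobian mul α (px + py) pz pw (mul x y) (α z) (α w) := by
  intro pw px py pz w hw x hx y hy z hz
  have hαw := hα_even pw w hw
  have hαx := hα_even px x hx
  have hαy := hα_even py y hy
  have hαz := hα_even pz z hz
  have hw2 := hα_even pw _ hαw
  have hx2 := hα_even px _ hαx
  have hy2 := hα_even py _ hαy
  have hz2 := hα_even pz _ hαz
  have hwx := hmul_even pw px w hw x hx
  have hwy := hmul_even pw py w hw y hy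
  have hwz := hmul_even pw pz w hw z hz
  have hxy := hmul_even px py x hx y hy
  have hxz := hmul_even px pz x hx z hz
  have hyz := hmul_even py pz y hy z hz
  have memJ : ∀ {a b c : ZMod 2} {u v t : M}, u ∈ A a → v ∈ A b → t ∈ A c →
      homSuperJacobian mul α a b c u v t ∈ A (a + b + c) := by
    intro a b c u v t hu hv ht
    refine add_mem (add_mem ?_ (Submodule.smul_mem _ _ ?_)) (Submodule.smul_mem _ _ ?_)
    · exact hmul_even _ _ _ (hmul_even _ _ _ hu _ hv) _ (hα_even _ _ ht)
    · have h := hmul_even _ _ _ (hmul_even _ _ _ hv _ ht) _ (hα_even _ _ hu)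
      rwa [show b + c + a = a + b + c by ring] at h
    · have h := hmul_even _ _ _ (hmul_even _ _ _ ht _ hu) _ (hα_even _ _ hv)
      rwa [show c + a + b = a + b + c by ring] at h
  -- outer swaps on LHS
  rw [hanti pw (px + py + pz) _ hw2 _ (memJ hx hy hz),
      hanti px (py + pz + pw) _ hx2 _ (memJ hy hz hw),
      hanti py (pz + pw + px) _ hy2 _ (memJ hz hw hx),
      hanti pz (pw + px + py) _ hz2 _ (memJ hw hx hy)]
  simp only [homSuperJacobian, hmult, map_add, map_smul, map_neg, LinearMap.add_apply,
    LinearMap.smul_apply, LinearMap.neg_apply, smul_add, smul_neg, smul_smul, neg_neg]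
  -- plain inner swaps
  rw [hanti pz px z hz x hx, hanti pz pw z hz w hw, hanti py pw y hy w hw,
      hanti pz px _ hαz _ hαx, hanti pz pw _ hαz _ hαw]
  simp only [map_add, map_smul, map_neg, LinearMap.add_apply,
    LinearMap.smul_apply, LinearMap.neg_apply, smul_add, smul_neg, smul_smul, neg_neg]
  have hαwx := hmul_even pw px _ hαw _ hαx
  have hαwy := hmul_even pw py _ hαw _ hαy
  have hαwz := hmul_even pw pz _ hαw _ hαz
  have hαxy := hmul_even px py _ hαx _ hαy
  have hαxz := hmul_even px pz _ hαx _ hαz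
  have hαyz := hmul_even py pz _ hαy _ hαz
  -- mixed swaps
  rw [hanti pz (pw + px) _ hαz _ hwx, hanti px (py + pz) _ hαx _ hyz,
      hanti px (pw + py) _ hαx _ hwy, hanti py (px + pz) _ hαy _ hxz,
      hanti py (pw + pz) _ hαy _ hwz, hanti pw (px + py) _ hαw _ hxy]
  simp only [map_add, map_smul, map_neg, LinearMap.add_apply,
    LinearMap.smul_apply, LinearMap.neg_apply, smul_add, smul_neg, smul_smul, neg_neg]
  -- outer pair-pair swaps
  rw [hanti (py + pz) (pw + px) _ hαyz _ hαwx, hanti (px + pz) (pw + py) _ hαxz _ hαwy,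
      hanti (px + py) (pw + pz) _ hαxy _ hαwz]
  simp only [map_add, map_smul, map_neg, LinearMap.add_apply,
    LinearMap.smul_apply, LinearMap.neg_apply, smul_add, smul_neg, smul_smul, neg_neg]
  match_scalars <;>
    fin_cases pw <;> fin_cases px <;> fin_cases py <;> fin_cases pz <;>
    norm_num (config := {decide := true}) [sgn, show ((0:ZMod 2)).val = 0 from rfl, show ((1:ZMod 2)).val = 1 from rfl,
      show ((2:ZMod 2)).val = 0 from rfl, show ((3:ZMod 2)).val = 1 from rfl,
      show ((4:ZMod 2)).val = 0 from rfl, show ((5:ZMod 2)).val = 1 from rfl,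
      show ((6:ZMod 2)).val = 0 from rfl, show ((7:ZMod 2)).val = 1 from rfl,
      show ((8:ZMod 2)).val = 0 from rfl, show ((9:ZMod 2)).val = 1 from rfl]
end

section
/- Let (M, ·, α) be a Hom-Malcev superalgebra over a field K of characteristic 0. Then for all homogeneous w, x, y, z: 2G(w,x,y,z) - α²(w)·J̃(x,y,z) + (-1)^{|x||w|} α²(x)·J̃(w,y,z) - (-1)^{(|y|+|z|)(|x|+|w|)} α²(y)·J̃(z,w,x) + (-1)^{|z|(|x|+|y|+|w|)} α²(z)·J̃(w,x,y) = J̃(w·x,α(y),α(z)) + (-1)^{(|x|+|w|)(|y|+|z|)} J̃(y·z,α(w),α(x)). -/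
/-- The map `G(w,x,y,z) = J̃(w·x,α(y),α(z)) - (-1)^{px pw} α²(x)·J̃(w,y,z)
    - (-1)^{pw(px+py+pz)} J̃(x,y,z)·α²(w)` for elements of parities `pw, px, py, pz`. -/
def Gmap {K M : Type*} [Field K] [AddCommGroup M] [Module K M]
    (mul : M →ₗ[K] M →ₗ[K] M) (α : M →ₗ[K] M)
    (pw px py pz : ZMod 2) (w x y z : M) : M :=
  homSuperJacobian mul α (pw + px) py pz (mul w x) (α y) (α z)
    - sgn K (px * pw) • mul (α (α x)) (homSuperJacobian mul α pw py pz w y z)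
    - sgn K (pw * (px + py + pz)) • mul (homSuperJacobian mul α px py pz x y z) (α (α w))

lemma zval0 : ZMod.val (0 : ZMod 2) = 0 := rfl
lemma zval1 : ZMod.val (1 : ZMod 2) = 1 := rfl
lemma zval2 : ZMod.val (2 : ZMod 2) = 0 := rfl
lemma zval3 : ZMod.val (3 : ZMod 2) = 1 := rfl
lemma zval4 : ZMod.val (4 : ZMod 2) = 0 := rfl

section
variable {K M : Type*} [Field K] [CharZero K] [AddCommGroup M] [Module K M]
    (A : ZMod 2 → Submodule K M)
    (mul : M →ₗ[K] M →ₗ[K] M) (α : M →ₗ[K] M)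

lemma hSJ_mem (hmul_even : ∀ i j : ZMod 2, ∀ x ∈ A i, ∀ y ∈ A j, mul x y ∈ A (i + j))
    (hα_even : ∀ i : ZMod 2, ∀ x ∈ A i, α x ∈ A i)
    (i j k : ZMod 2) (x : M) (hx : x ∈ A i) (y : M) (hy : y ∈ A j) (z : M) (hz : z ∈ A k) :
    homSuperJacobian mul α i j k x y z ∈ A (i + j + k) := by
  refine Submodule.add_mem _ (Submodule.add_mem _ ?_ (Submodule.smul_mem _ _ ?_))
    (Submodule.smul_mem _ _ ?_)
  · exact hmul_even _ _ _ (hmul_even _ _ _ hx _ hy) _ (hα_even _ _ hz)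
  · have h := hmul_even (j+k) i _ (hmul_even _ _ _ hy _ hz) _ (hα_even _ _ hx)
    rwa [show j+k+i = i+j+k by ring] at h
  · have h := hmul_even (k+i) j _ (hmul_even _ _ _ hz _ hx) _ (hα_even _ _ hy)
    rwa [show k+i+j = i+j+k by ring] at h

lemma hSJ_cyc (i j k : ZMod 2) (x y z : M) :
    homSuperJacobian mul α i j k x y z
      = sgn K (i * (j + k)) • homSuperJacobian mul α j k i y z x := by
  simp only [homSuperJacobian]
  match_scalars <;> fin_cases i <;> fin_cases j <;> fin_cases k <;>
    norm_num [sgn, zval0, zval1, zval2, zval3, zval4, ZMod.val] <;> simp (config := {decide := true})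

lemma hSJ_swap (hanti : ∀ i j : ZMod 2, ∀ x ∈ A i, ∀ y ∈ A j,
      mul x y = -(sgn K (i * j) • mul y x))
    (i j k : ZMod 2) (x : M) (hx : x ∈ A i) (y : M) (hy : y ∈ A j) (z : M) (hz : z ∈ A k) :
    homSuperJacobian mul α j i k y x z
      = -(sgn K (i * j) • homSuperJacobian mul α i j k x y z) := by
  simp only [homSuperJacobian]
  rw [hanti j i y hy x hx, hanti i k x hx z hz, hanti k j z hz y hy]
  simp only [map_neg, map_smul, LinearMap.neg_apply, LinearMap.smul_apply]
  match_scalars <;> fin_cases i <;> fin_cases j <;> fin_cases k <;>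
    norm_num [sgn, zval0, zval1, zval2, zval3, zval4, ZMod.val] <;> simp (config := {decide := true})

lemma hSJ_third (hanti : ∀ i j : ZMod 2, ∀ x ∈ A i, ∀ y ∈ A j,
      mul x y = -(sgn K (i * j) • mul y x))
    (i j k a b : ZMod 2) (x y : M) (u : M) (hu : u ∈ A a) (v : M) (hv : v ∈ A b) :
    homSuperJacobian mul α i j k x y (mul u v)
      = -(sgn K (a * b) • homSuperJacobian mul α i j k x y (mul v u)) := by
  simp only [homSuperJacobian]
  rw [hanti a b u hu v hv]
  simp only [map_neg, map_smul, LinearMap.neg_apply, LinearMap.smul_apply]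
  module

end

set_option maxHeartbeats 4000000 in
theorem stmt8
    {K M : Type*} [Field K] [CharZero K] [AddCommGroup M] [Module K M]
    (A : ZMod 2 → Submodule K M) (hA : DirectSum.IsInternal A)
    (mul : M →ₗ[K] M →ₗ[K] M) (α : M →ₗ[K] M)
    (hmul_even : ∀ i j : ZMod 2, ∀ x ∈ A i, ∀ y ∈ A j, mul x y ∈ A (i + j))
    (hα_even : ∀ i : ZMod 2, ∀ x ∈ A i, α x ∈ A i)
    (hmult : ∀ x y : M, α (mul x y) = mul (α x) (α y))
    (hanti : ∀ i j : ZMod 2, ∀ x ∈ A i, ∀ y ∈ A j,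
      mul x y = -(sgn K (i * j) • mul y x))
    (hmalcev : ∀ pt px py pz : ZMod 2, ∀ t ∈ A pt, ∀ x ∈ A px, ∀ y ∈ A py, ∀ z ∈ A pz,
      (2 : K) • mul (α (α t)) (homSuperJacobian mul α px py pz x y z) =
        homSuperJacobian mul α pt px (py + pz) (α t) (α x) (mul y z)
          + sgn K (px * (py + pz)) •
              homSuperJacobian mul α pt py (pz + px) (α t) (α y) (mul z x)
          + sgn K (pz * (px + py)) •
              homSuperJacobian mul α pt pz (px + py) (α t) (α z) (mul x y)) :
    ∀ pw px py pz : ZMod 2, ∀ w ∈ A pw, ∀ x ∈ A px, ∀ y ∈ A py, ∀ z ∈ A pz,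
      (2 : K) • Gmap mul α pw px py pz w x y z
          - mul (α (α w)) (homSuperJacobian mul α px py pz x y z)
          + sgn K (px * pw) • mul (α (α x)) (homSuperJacobian mul α pw py pz w y z)
          - sgn K ((py + pz) * (px + pw)) •
              mul (α (α y)) (homSuperJacobian mul α pz pw px z w x)
          + sgn K (pz * (px + py + pw)) •
              mul (α (α z)) (homSuperJacobian mul α pw px py w x y) =
        homSuperJacobian mul α (pw + px) py pz (mul w x) (α y) (α z)
          + sgn K ((px + pw) * (py + pz)) •
              homSuperJacobian mul α (py + pz) pw px (mul y z) (α w) (α x) := by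
  intro pw px py pz w hw x hx y hy z hz
  have hααw : α (α w) ∈ A pw := hα_even _ _ (hα_even _ _ hw)
  have hααx : α (α x) ∈ A px := hα_even _ _ (hα_even _ _ hx)
  have hαw : α w ∈ A pw := hα_even _ _ hw
  have hαx : α x ∈ A px := hα_even _ _ hx
  have hαy : α y ∈ A py := hα_even _ _ hy
  have hαz : α z ∈ A pz := hα_even _ _ hz
  have hyz : mul y z ∈ A (py + pz) := hmul_even _ _ _ hy _ hz
  have hwx : mul w x ∈ A (pw + px) := hmul_even _ _ _ hw _ hx
  have hxz : mul x z ∈ A (px + pz) := hmul_even _ _ _ hx _ hz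
  have hxy : mul x y ∈ A (px + py) := hmul_even _ _ _ hx _ hy
  have hzw : mul z w ∈ A (pz + pw) := hmul_even _ _ _ hz _ hw
  have hyw : mul y w ∈ A (py + pw) := hmul_even _ _ _ hy _ hw
  have hJ : homSuperJacobian mul α px py pz x y z ∈ A (px + py + pz) :=
    hSJ_mem A mul α hmul_even hα_even px py pz x hx y hy z hz
  have h0 : mul (homSuperJacobian mul α px py pz x y z) (α (α w))
      = -(sgn K ((px + py + pz) * pw) •
          mul (α (α w)) (homSuperJacobian mul α px py pz x y z)) :=
    hanti _ _ _ hJ _ hααw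
  have hmW := hmalcev pw px py pz w hw x hx y hy z hz
  have hmX := hmalcev px pw py pz x hx w hw y hy z hz
  have hmY := hmalcev py pz pw px y hy z hz w hw x hx
  have hmZ := hmalcev pz pw px py z hz w hw x hx y hy
  have q1 : homSuperJacobian mul α px pw (py + pz) (α x) (α w) (mul y z)
      = -(sgn K (pw * px) •
          homSuperJacobian mul α pw px (py + pz) (α w) (α x) (mul y z)) :=
    hSJ_swap A mul α hanti pw px (py + pz) (α w) hαw (α x) hαx (mul y z) hyz
  have q2 : homSuperJacobian mul α (pw + px) py pz (mul w x) (α y) (α z)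
      = sgn K ((pw + px) * (py + pz)) •
          homSuperJacobian mul α py pz (pw + px) (α y) (α z) (mul w x) :=
    hSJ_cyc mul α (pw + px) py pz (mul w x) (α y) (α z)
  have q3 : homSuperJacobian mul α pz py (pw + px) (α z) (α y) (mul w x)
      = -(sgn K (py * pz) •
          homSuperJacobian mul α py pz (pw + px) (α y) (α z) (mul w x)) :=
    hSJ_swap A mul α hanti py pz (pw + px) (α y) hαy (α z) hαz (mul w x) hwx
  have q4 : homSuperJacobian mul α py pw (px + pz) (α y) (α w) (mul x z)
      = (sgn K (pw * py) * sgn K (px * pz)) •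
          homSuperJacobian mul α pw py (pz + px) (α w) (α y) (mul z x) := by
    rw [hSJ_swap A mul α hanti pw py (px + pz) (α w) hαw (α y) hαy (mul x z) hxz,
      hSJ_third A mul α hanti pw py (px + pz) px pz (α w) (α y) x hx z hz,
      add_comm px pz]
    module
  have q5 : homSuperJacobian mul α pz pw (px + py) (α z) (α w) (mul x y)
      = -(sgn K (pw * pz) •
          homSuperJacobian mul α pw pz (px + py) (α w) (α z) (mul x y)) :=
    hSJ_swap A mul α hanti pw pz (px + py) (α w) hαw (α z) hαz (mul x y) hxy
  have q6 : homSuperJacobian mul α py px (pz + pw) (α y) (α x) (mul z w)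
      = -(sgn K (px * py) •
          homSuperJacobian mul α px py (pz + pw) (α x) (α y) (mul z w)) :=
    hSJ_swap A mul α hanti px py (pz + pw) (α x) hαx (α y) hαy (mul z w) hzw
  have q7 : homSuperJacobian mul α pz px (py + pw) (α z) (α x) (mul y w)
      = (sgn K (px * pz) * sgn K (py * pw)) •
          homSuperJacobian mul α px pz (pw + py) (α x) (α z) (mul w y) := by
    rw [hSJ_swap A mul α hanti px pz (py + pw) (α x) hαx (α z) hαz (mul y w) hyw,
      hSJ_third A mul α hanti px pz (py + pw) py pw (α x) (α z) y hy w hw,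
      add_comm py pw]
    module
  have q8 : homSuperJacobian mul α (py + pz) pw px (mul y z) (α w) (α x)
      = sgn K ((py + pz) * (pw + px)) •
          homSuperJacobian mul α pw px (py + pz) (α w) (α x) (mul y z) :=
    hSJ_cyc mul α (py + pz) pw px (mul y z) (α w) (α x)
  simp only [Gmap]
  linear_combination (norm :=
      (match_scalars <;> fin_cases pw <;> fin_cases px <;> fin_cases py <;> fin_cases pz <;>
        norm_num [sgn, zval0, zval1, zval2, zval3, zval4, ZMod.val] <;> simp (config := {decide := true}) <;> norm_num))
    (-(2 * sgn K (pw * (px + py + pz)))) • h0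
      + (2:K)⁻¹ • hmW
      + (-(sgn K (px * pw) / 2)) • hmX
      + (-(sgn K ((py + pz) * (px + pw)) / 2)) • hmY
      + (sgn K (pz * (px + py + pw)) / 2) • hmZ
      + q2
      + (-(sgn K ((px + pw) * (py + pz)))) • q8
      + (-(sgn K (px * pw) / 2)) • q1
      + (-(sgn K ((py + pz) * (px + pw)) * sgn K (pz * (pw + px)) / 2)) • q4
      + (sgn K (pz * (px + py + pw)) / 2) • q5
      + (-(sgn K ((py + pz) * (px + pw)) * sgn K (px * (pz + pw)) / 2)) • q6
      + (sgn K (pz * (px + py + pw)) * sgn K (pw * (px + py)) / 2) • q7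
      + (sgn K (pz * (px + py + pw)) * sgn K (py * (pw + px)) / 2) • q3
end
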